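/- Let 𝔫 be the 5-dimensional real Lie algebra l₅,₆ (case B) with orthonormal basis {E₁,…,E₅} and non-zero brackets [E₁,E₂] = m·E₃ + s·E₄ + u·E₅, [E₁,E₃] = v·E₄ + w·E₅, [E₁,E₄] = x·E₅, [E₂,E₃] = y·E₅, where m, v, x, y are non-zero reals, s > 0 and u, w ∈ ℝ. Then there exist no c ∈ ℝ and no derivation D of 𝔫 with Ric = c·Id + D; i.e. 𝔫 is never an algebraic Ricci soliton. -/
import Mathlib


open scoped BigOperators

namespace Nilsoliton10

noncomputable section

abbrev V : Type := Fin 5 → ℝ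

/-- The orthonormal basis vectors E₁,…,E₅ (indexed 0,…,4). -/
def E (i : Fin 5) : V := Pi.single i 1

/-- The inner product making `E` an orthonormal basis. -/
def ip (x y : V) : ℝ := ∑ i, x i * y i

/-- `D` is a derivation of the bracket `br`. -/
def IsDerivation (br : V → V → V) (D : V →ₗ[ℝ] V) : Prop :=
  ∀ X Y : V, D (br X Y) = br (D X) Y + br X (D Y)

/-- `Ric` is the Ricci operator of the nilpotent Lie group with left-invariant
metric determined by the bracket `br` and the orthonormal basis `E`. -/
def IsRicci (br : V → V → V) (Ric : V →ₗ[ℝ] V) : Prop :=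
  ∀ X Y : V, ip (Ric X) Y =
      -(1/2) * (∑ i : Fin 5, ip (br X (E i)) (br Y (E i)))
      + (1/4) * (∑ i : Fin 5, ∑ j : Fin 5, ip (br (E i) (E j)) X * ip (br (E i) (E j)) Y)

/-- The bracket of l₅,₆ (case B): [E₁,E₂] = m·E₃ + s·E₄ + u·E₅,
[E₁,E₃] = v·E₄ + w·E₅, [E₁,E₄] = x·E₅, [E₂,E₃] = y·E₅. -/
def br (m s u v w x y : ℝ) (X Y : V) : V :=
  (m * (X 0 * Y 1 - X 1 * Y 0)) • E 2 + (s * (X 0 * Y 1 - X 1 * Y 0) + v * (X 0 * Y 2 - X 2 * Y 0)) • E 3 + (u * (X 0 * Y 1 - X 1 * Y 0) + w * (X 0 * Y 2 - X 2 * Y 0) + x * (X 0 * Y 3 - X 3 * Y 0) + y * (X 1 * Y 2 - X 2 * Y 1)) • E 4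

lemma ip_def (a b : V) :
    ip a b = a 0 * b 0 + a 1 * b 1 + a 2 * b 2 + a 3 * b 3 + a 4 * b 4 := by
  simp [ip, Fin.sum_univ_five]

lemma br_apply0 (m s u v w x y : ℝ) (X Y : V) : br m s u v w x y X Y 0 = 0 := by
  simp [br, E, Pi.single_apply]

lemma br_apply1 (m s u v w x y : ℝ) (X Y : V) : br m s u v w x y X Y 1 = 0 := by
  simp [br, E, Pi.single_apply]

lemma br_apply2 (m s u v w x y : ℝ) (X Y : V) :
    br m s u v w x y X Y 2 = m * (X 0 * Y 1 - X 1 * Y 0) := by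
  simp [br, E, Pi.single_apply]

lemma br_apply3 (m s u v w x y : ℝ) (X Y : V) :
    br m s u v w x y X Y 3 = s * (X 0 * Y 1 - X 1 * Y 0) + v * (X 0 * Y 2 - X 2 * Y 0) := by
  simp [br, E, Pi.single_apply]

lemma br_apply4 (m s u v w x y : ℝ) (X Y : V) :
    br m s u v w x y X Y 4 = u * (X 0 * Y 1 - X 1 * Y 0) + w * (X 0 * Y 2 - X 2 * Y 0)
      + x * (X 0 * Y 3 - X 3 * Y 0) + y * (X 1 * Y 2 - X 2 * Y 1) := by
  simp [br, E, Pi.single_apply]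

theorem stmt10 (m s u v w x y : ℝ) (hm : m ≠ 0) (hv : v ≠ 0) (hx : x ≠ 0) (hy : y ≠ 0) (hs : 0 < s)
    (Ric : V →ₗ[ℝ] V) (hRic : IsRicci (br m s u v w x y) Ric) :
    ¬ ∃ (c : ℝ) (D : V →ₗ[ℝ] V), IsDerivation (br m s u v w x y) D ∧
        Ric = c • (LinearMap.id : V →ₗ[ℝ] V) + D := by
  rintro ⟨c, D, hD, hEq⟩
  have hDX : ∀ X : V, D X = Ric X - c • X := by
    intro X
    have h := congrArg (fun f : V →ₗ[ℝ] V => f X) hEq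
    simp at h
    rw [h]; abel
  have hE : ∀ i j : Fin 5, E i j = if j = i then 1 else 0 := by
    intro i j; simp [E, Pi.single_apply]
  -- Ricci matrix entries we need
  have hval : ∀ (a : Fin 5) (b : Fin 5), Ric (E a) b = ip (Ric (E a)) (E b) := by
    intro a b
    rw [ip_def]
    fin_cases b <;> simp [hE]
  have hcomp : ∀ a b : Fin 5, ip (Ric (E a)) (E b) =
      -(1/2) * (∑ i : Fin 5, ip (br m s u v w x y (E a) (E i)) (br m s u v w x y (E b) (E i)))
      + (1/4) * (∑ i : Fin 5, ∑ j : Fin 5,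
          ip (br m s u v w x y (E i) (E j)) (E a) * ip (br m s u v w x y (E i) (E j)) (E b)) :=
    fun a b => hRic (E a) (E b)
  have h20 : Ric (E 2) 0 = u * y / 2 := by
    rw [hval, hcomp]
    simp only [Fin.sum_univ_five, ip_def, br_apply0, br_apply1, br_apply2, br_apply3, br_apply4, hE]
    simp
    try ring
  have h30 : Ric (E 3) 0 = 0 := by
    rw [hval, hcomp]
    simp only [Fin.sum_univ_five, ip_def, br_apply0, br_apply1, br_apply2, br_apply3, br_apply4, hE]
    simp
    try ring
  have h40 : Ric (E 4) 0 = 0 := by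
    rw [hval, hcomp]
    simp only [Fin.sum_univ_five, ip_def, br_apply0, br_apply1, br_apply2, br_apply3, br_apply4, hE]
    simp
    try ring
  have h21 : Ric (E 2) 1 = -(s * v + u * w) / 2 := by
    rw [hval, hcomp]
    simp only [Fin.sum_univ_five, ip_def, br_apply0, br_apply1, br_apply2, br_apply3, br_apply4, hE]
    simp
    try ring
  have h31 : Ric (E 3) 1 = -(u * x) / 2 := by
    rw [hval, hcomp]
    simp only [Fin.sum_univ_five, ip_def, br_apply0, br_apply1, br_apply2, br_apply3, br_apply4, hE]
    simp
    try ring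
  have h41 : Ric (E 4) 1 = 0 := by
    rw [hval, hcomp]
    simp only [Fin.sum_univ_five, ip_def, br_apply0, br_apply1, br_apply2, br_apply3, br_apply4, hE]
    simp
    try ring
  -- D components
  have hD2 : ∀ b : Fin 5, D (E 2) b = Ric (E 2) b - c * E 2 b := by
    intro b; rw [hDX]; simp
  have hD3 : ∀ b : Fin 5, D (E 3) b = Ric (E 3) b - c * E 3 b := by
    intro b; rw [hDX]; simp
  have hD4 : ∀ b : Fin 5, D (E 4) b = Ric (E 4) b - c * E 4 b := by
    intro b; rw [hDX]; simp
  -- bracket [E0, E1]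
  have hb : br m s u v w x y (E 0) (E 1) = m • E 2 + s • E 3 + u • E 4 := by
    funext k
    fin_cases k <;>
      simp [br_apply0, br_apply1, br_apply2, br_apply3, br_apply4, hE, Pi.add_apply]
  have key := hD (E 0) (E 1)
  rw [hb] at key
  have hlin : D (m • E 2 + s • E 3 + u • E 4) = m • D (E 2) + s • D (E 3) + u • D (E 4) := by
    simp [map_add, map_smul]
  rw [hlin] at key
  have key0 := congrFun key 0
  have key1 := congrFun key 1
  simp only [Pi.add_apply, Pi.smul_apply, smul_eq_mul, br_apply0, br_apply1] at key0 key1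
  rw [hD2 0, hD3 0, hD4 0, h20, h30, h40] at key0
  rw [hD2 1, hD3 1, hD4 1, h21, h31, h41] at key1
  simp only [hE] at key0 key1
  simp at key0 key1
  -- key0 : m = 0 ∨ u = 0 ∨ y = 0
  have hu : u = 0 := by
    rcases key0 with h | h | h
    · exact absurd h hm
    · exact h
    · exact absurd h hy
  rw [hu] at key1
  have h2 : m * s * v = 0 := by nlinarith [key1]
  rcases mul_eq_zero.mp h2 with h | h
  · rcases mul_eq_zero.mp h with h' | h'
    · exact hm h'
    · exact absurd h' (ne_of_gt hs)
  · exact hv h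

end

end Nilsoliton10
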